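/- Let C, D : ℝ → ℝ → ℝ be functions satisfying, for all real n ≥ 1 and k ≥ 1: (Rule 1) C(n,k) ≤ D(n,k) + n; (Rule 2) for every real x with 1 ≤ x ≤ k, D(n,k) ≤ C(n,x) + D(k/x, k); (Rule 3) D(n,k) ≤ D(√k, k); (Rule 4) C(n,k) ≤ n·log₂k and D(n,k) ≤ n·log₂k. Then for every integer j ≥ 2 and all reals n ≥ 1, k ≥ 1, if n ≥ ((j+1)/2)·k^(1/j)·log₂k, then C(n,k) ≤ j·n. -/

import Mathlib

/-- Paper's Theorem 1 (abstract form): if `C` and `D` satisfy Rules 1–4, then for every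
integer `j ≥ 2`, whenever `n ≥ ((j+1)/2) * k^(1/j) * log₂ k`, we have `C n k ≤ j * n`. -/
theorem stmt_0 (C D : ℝ → ℝ → ℝ)
    (rule1 : ∀ n k : ℝ, 1 ≤ n → 1 ≤ k → C n k ≤ D n k + n)
    (rule2 : ∀ n k x : ℝ, 1 ≤ n → 1 ≤ k → 1 ≤ x → x ≤ k → D n k ≤ C n x + D (k / x) k)
    (rule3 : ∀ n k : ℝ, 1 ≤ n → 1 ≤ k → D n k ≤ D (Real.sqrt k) k)
    (rule4 : ∀ n k : ℝ, 1 ≤ n → 1 ≤ k →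
      C n k ≤ n * Real.logb 2 k ∧ D n k ≤ n * Real.logb 2 k) :
    ∀ j : ℤ, 2 ≤ j → ∀ n k : ℝ, 1 ≤ n → 1 ≤ k →
      n ≥ (((j : ℝ) + 1) / 2) * k ^ ((1 : ℝ) / (j : ℝ)) * Real.logb 2 k →
      C n k ≤ (j : ℝ) * n := by
  intro j hj n k hn hk hnk
  have hone_le_rpow : ∀ (K a : ℝ), 1 ≤ K → 0 ≤ a → 1 ≤ K ^ a := by
    intro K a hK ha
    have h := Real.rpow_le_rpow_of_exponent_le hK ha
    simpa using h
  set c : ℝ := (j : ℝ) * ((j : ℝ) + 1) with hcdef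
  -- Key strengthened claim, by induction on i ≥ 2
  have key : ∀ i : ℕ, 2 ≤ i → ∀ K m : ℝ, 1 ≤ K → 1 ≤ m →
      (c - 2) / (2 * (i : ℝ)) * (K ^ ((1 : ℝ) / (i : ℝ)) * Real.logb 2 K) ≤ m →
      D m K ≤ ((i : ℝ) - 1) * m
        - (c - (i : ℝ) * ((i : ℝ) + 1)) / (2 * (i : ℝ))
          * (K ^ ((1 : ℝ) / (i : ℝ)) * Real.logb 2 K) := by
    intro i hi
    induction i, hi using Nat.le_induction with
    | base =>
      intro K m hK hm hcond
      have hK0 : (0 : ℝ) < K := lt_of_lt_of_le one_pos hK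
      have hL : 0 ≤ Real.logb 2 K := Real.logb_nonneg one_lt_two hK
      have hs : Real.sqrt K = K ^ ((1 : ℝ) / ((2 : ℕ) : ℝ)) := by
        rw [Real.sqrt_eq_rpow]; norm_num
      have hs1 : (1 : ℝ) ≤ Real.sqrt K := by
        rw [hs]; exact hone_le_rpow _ _ hK (by norm_num)
      have h1 := rule3 m K hm hK
      have h2 := (rule4 (Real.sqrt K) K hs1 hK).2
      rw [hs] at h1 h2
      push_cast at hcond h1 h2 ⊢
      linarith [h1, h2, hcond]
    | succ i hi IH =>
      intro K m hK hm hcond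
      have hK0 : (0 : ℝ) < K := lt_of_lt_of_le one_pos hK
      have hL : 0 ≤ Real.logb 2 K := Real.logb_nonneg one_lt_two hK
      set iR : ℝ := (i : ℝ) with hiRdef
      have hiR2 : (2 : ℝ) ≤ iR := by rw [hiRdef]; exact_mod_cast hi
      have hiR0 : iR ≠ 0 := by linarith
      have hiR1 : iR + 1 ≠ 0 := by linarith
      push_cast at hcond ⊢
      set x : ℝ := K ^ (iR / (iR + 1)) with hxdef
      have hx1 : 1 ≤ x := hone_le_rpow _ _ hK (by positivity)
      have hxK : x ≤ K := by
        have h := Real.rpow_le_rpow_of_exponent_le hK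
          (show iR / (iR + 1) ≤ 1 by rw [div_le_one (by linarith)]; linarith)
        simpa using h
      have hdiv : K / x = K ^ ((1 : ℝ) / (iR + 1)) := by
        have he : (1 : ℝ) / (iR + 1) = 1 - iR / (iR + 1) := by field_simp; ring
        rw [he, Real.rpow_sub hK0, Real.rpow_one]
      have hRn1 : 1 ≤ K ^ ((1 : ℝ) / (iR + 1)) := hone_le_rpow _ _ hK (by positivity)
      have hxr : x ^ ((1 : ℝ) / iR) = K ^ ((1 : ℝ) / (iR + 1)) := by
        rw [hxdef, ← Real.rpow_mul hK0.le]
        congr 1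
        field_simp
      have hlogx : Real.logb 2 x = iR / (iR + 1) * Real.logb 2 K := by
        rw [hxdef]
        simp only [Real.logb, Real.log_rpow hK0]
        ring
      have h1 := rule2 m K x hm hK hx1 hxK
      rw [hdiv] at h1
      have h2 := rule1 m x hm hx1
      have h3 := (rule4 (K ^ ((1 : ℝ) / (iR + 1))) K hRn1 hK).2
      have hcond' : (c - 2) / (2 * iR) * (x ^ ((1 : ℝ) / iR) * Real.logb 2 x) ≤ m := by
        rw [hxr, hlogx]
        have heq : (c - 2) / (2 * iR) * (K ^ ((1 : ℝ) / (iR + 1)) * (iR / (iR + 1) * Real.logb 2 K))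
            = (c - 2) / (2 * (iR + 1)) * (K ^ ((1 : ℝ) / (iR + 1)) * Real.logb 2 K) := by
          field_simp
        rw [heq]
        exact hcond
      have h4 := IH x m hx1 hm hcond'
      rw [hxr, hlogx] at h4
      set E : ℝ := K ^ ((1 : ℝ) / (iR + 1)) * Real.logb 2 K with hEdef
      have hco : (c - iR * (iR + 1)) / (2 * iR)
            * (K ^ ((1 : ℝ) / (iR + 1)) * (iR / (iR + 1) * Real.logb 2 K))
          = (c - iR * (iR + 1)) / (2 * (iR + 1)) * E := by
        rw [hEdef]; field_simp
      rw [hco] at h4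
      have hgoalco : (c - (iR + 1) * ((iR + 1) + 1)) / (2 * (iR + 1)) * E
          = (c - iR * (iR + 1)) / (2 * (iR + 1)) * E - E := by
        field_simp
        ring
      linarith [h1, h2, h3, h4, hgoalco]
  -- Now apply the key claim with i = j
  have hj0 : (0 : ℤ) ≤ j := by linarith
  have hJ2 : 2 ≤ j.toNat := by omega
  have hJR : ((j.toNat : ℕ) : ℝ) = (j : ℝ) := by
    exact_mod_cast congrArg (fun z : ℤ => (z : ℝ)) (Int.toNat_of_nonneg hj0)
  set jR : ℝ := (j : ℝ) with hjRdef
  have hjR2 : (2 : ℝ) ≤ jR := by rw [hjRdef]; exact_mod_cast hj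
  have hL : 0 ≤ Real.logb 2 k := Real.logb_nonneg one_lt_two hk
  have hRL : 0 ≤ k ^ ((1 : ℝ) / jR) * Real.logb 2 k :=
    mul_nonneg (Real.rpow_nonneg (by linarith : (0:ℝ) ≤ k) _) hL
  have hkey0 := key j.toNat hJ2 k n hk hn
  rw [hJR] at hkey0
  have hcondj : (c - 2) / (2 * jR) * (k ^ ((1 : ℝ) / jR) * Real.logb 2 k) ≤ n := by
    have hco : (c - 2) / (2 * jR) ≤ (jR + 1) / 2 := by
      rw [div_le_div_iff₀ (by linarith) (by norm_num)]
      rw [hcdef]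
      nlinarith
    calc (c - 2) / (2 * jR) * (k ^ ((1 : ℝ) / jR) * Real.logb 2 k)
        ≤ (jR + 1) / 2 * (k ^ ((1 : ℝ) / jR) * Real.logb 2 k) :=
          mul_le_mul_of_nonneg_right hco hRL
      _ = (jR + 1) / 2 * k ^ ((1 : ℝ) / jR) * Real.logb 2 k := by ring
      _ ≤ n := hnk
  have hkey := hkey0 hcondj
  have hzero : c - jR * (jR + 1) = 0 := by rw [hcdef]; ring
  rw [hzero, zero_div, zero_mul, sub_zero] at hkey
  have hfin := rule1 n k hn hk
  linarith
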